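/- Let N, K, Λ, F be positive natural numbers with K ≤ N, and let λ : {1,…,K} → {1,…,Λ} be the user-to-helper-cache assignment (with users and caches ordered). Let C_s, C_p, C_x be positive natural numbers. Suppose there exist functions z_μ : (Fin N → Fin 2^F) → Fin C_s for each μ ∈ {1,…,Λ} (helper-cache placements), p_k : (Fin N → Fin 2^F) → Fin C_p for each k ∈ {1,…,K} (private-cache placements), an encoder x_d : (Fin N → Fin 2^F) → Fin C_x for every demand vector d : {1,…,K} → {1,…,N}, and decoders g_{k,d} : Fin C_x × Fin C_s × Fin C_p → Fin 2^F such that for every file tuple W : Fin N → Fin 2^F, every demand vector d, and every user k, g_{k,d}( x_d(W), z_{λ(k)}(W), p_k(W) ) = W(d(k)). Then for every u with 1 ≤ u ≤ K, writing λ_u := λ(u) and q := ⌊N/u⌋, it holds that (2^F)^{u·q} ≤ C_x^{q} · C_s^{λ_u} · C_p^{u}. -/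

import Mathlib

/-- deterministic cut-set bound (Theorem 4 of the paper).  A server stores
`N` files of `F` bits each; each of `K` users (user `k` attached to helper cache
`lam k`, users and caches ordered so that `lam` is nondecreasing) must recover its
demanded file from the broadcast (alphabet size `Cx`), its helper cache (alphabet size
`Cs`) and its private cache (alphabet size `Cp`).  Then for every `1 ≤ u ≤ K`, with
`q = ⌊N/u⌋`, `(2^F)^(u·q) ≤ Cx^q · Cs^(lam u) · Cp^u`. -/
theorem stmt11 (N K Λ F : ℕ) (hN : 0 < N) (hK : 0 < K) (hΛ : 0 < Λ) (hF : 0 < F)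
    (hKN : K ≤ N)
    (lam : ℕ → ℕ)
    (hlam : ∀ k ∈ Finset.Icc 1 K, lam k ∈ Finset.Icc 1 Λ)
    (hlammono : ∀ k k', 1 ≤ k → k ≤ k' → k' ≤ K → lam k ≤ lam k')
    (Cs Cp Cx : ℕ) (hCs : 0 < Cs) (hCp : 0 < Cp) (hCx : 0 < Cx)
    (z : ℕ → (ℕ → Fin (2 ^ F)) → Fin Cs)
    (p : ℕ → (ℕ → Fin (2 ^ F)) → Fin Cp)
    (x : (ℕ → ℕ) → (ℕ → Fin (2 ^ F)) → Fin Cx)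
    (g : ℕ → (ℕ → ℕ) → Fin Cx × Fin Cs × Fin Cp → Fin (2 ^ F))
    (hcorrect : ∀ (W : ℕ → Fin (2 ^ F)) (d : ℕ → ℕ),
        (∀ k ∈ Finset.Icc 1 K, d k ∈ Finset.Icc 1 N) →
        ∀ k ∈ Finset.Icc 1 K, g k d (x d W, z (lam k) W, p k W) = W (d k)) :
    ∀ u, 1 ≤ u → u ≤ K →
      (2 ^ F) ^ (u * (N / u)) ≤ Cx ^ (N / u) * Cs ^ (lam u) * Cp ^ u := by
  intro u hu huK
  set q := N / u with hqdef
  have hu0 : 0 < u := hu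
  have hq1 : 1 ≤ q := (Nat.one_le_div_iff hu0).2 (le_trans huK hKN)
  have huqN : u * q ≤ N := by
    rw [mul_comm]; exact Nat.div_mul_le_self N u
  have hqu : (q - 1) * u + u = q * u := by
    calc (q - 1) * u + u = ((q - 1) + 1) * u := by ring
      _ = q * u := by rw [Nat.sub_add_cancel hq1]
  have hquc : q * u = u * q := mul_comm q u
  have h2F : 0 < 2 ^ F := Nat.pow_pos (by norm_num)
  have hlamu1 : 1 ≤ lam u := (Finset.mem_Icc.1 (hlam u (Finset.mem_Icc.2 ⟨hu, huK⟩))).1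
  -- embedding of a tuple of u*q files into a full library
  let emb : (Fin (u * q) → Fin (2 ^ F)) → ℕ → Fin (2 ^ F) := fun t n =>
    if h : 1 ≤ n ∧ n ≤ u * q then t ⟨n - 1, by omega⟩ else ⟨0, h2F⟩
  -- demand vectors
  let dem : ℕ → ℕ → ℕ := fun j k => if k ≤ u then j * u + k else 1
  have hjk2 : ∀ j < q, ∀ k ≤ u, j * u + k ≤ u * q := by
    intro j hj k hk
    have hm : j * u ≤ (q - 1) * u := Nat.mul_le_mul_right u (by omega)
    omega
  have hdem : ∀ j < q, ∀ k ∈ Finset.Icc 1 K, dem j k ∈ Finset.Icc 1 N := by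
    intro j hj k hk
    rw [Finset.mem_Icc] at hk ⊢
    by_cases h : k ≤ u
    · simp only [dem, if_pos h]
      have := hjk2 j hj k h
      omega
    · simp only [dem, if_neg h]; omega
  -- the injection
  let f : (Fin (u * q) → Fin (2 ^ F)) →
      (Fin q → Fin Cx) × (Fin (lam u) → Fin Cs) × (Fin u → Fin Cp) :=
    fun t => (fun j => x (dem j) (emb t),
              fun μ => z (μ.1 + 1) (emb t),
              fun k => p (k.1 + 1) (emb t))
  have hf : Function.Injective f := by
    have hleft : ∀ t : Fin (u * q) → Fin (2 ^ F), ∀ i : Fin (u * q),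
        t i = g (i.1 % u + 1) (dem (i.1 / u))
          ((f t).1 ⟨i.1 / u, by
              have := i.2
              exact Nat.div_lt_of_lt_mul this⟩,
           (f t).2.1 ⟨lam (i.1 % u + 1) - 1, by
              have hk1 : 1 ≤ i.1 % u + 1 := by omega
              have hku : i.1 % u + 1 ≤ u := by
                have := Nat.mod_lt i.1 hu0; omega
              have h1 : 1 ≤ lam (i.1 % u + 1) :=
                (Finset.mem_Icc.1 (hlam _ (Finset.mem_Icc.2 ⟨hk1, by omega⟩))).1
              have h2 : lam (i.1 % u + 1) ≤ lam u := hlammono _ _ hk1 hku huK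
              omega⟩,
           (f t).2.2 ⟨i.1 % u, Nat.mod_lt i.1 hu0⟩) := by
      intro t i
      have hi := i.2
      have hmod : i.1 % u < u := Nat.mod_lt i.1 hu0
      have hdiv : i.1 / u < q := Nat.div_lt_of_lt_mul hi
      have hku : i.1 % u + 1 ≤ u := by omega
      have hkK : i.1 % u + 1 ∈ Finset.Icc 1 K := Finset.mem_Icc.2 ⟨by omega, by omega⟩
      have h1 : 1 ≤ lam (i.1 % u + 1) := (Finset.mem_Icc.1 (hlam _ hkK)).1
      have hzeq : lam (i.1 % u + 1) - 1 + 1 = lam (i.1 % u + 1) := by omega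
      have hcor := hcorrect (emb t) (dem (i.1 / u)) (hdem (i.1 / u) hdiv)
        (i.1 % u + 1) hkK
      simp only [f, hzeq]
      rw [hcor]
      have hdk : dem (i.1 / u) (i.1 % u + 1) = (i.1 / u) * u + (i.1 % u + 1) :=
        if_pos hku
      rw [hdk]
      have hjk1 : 1 ≤ (i.1 / u) * u + (i.1 % u + 1) := by omega
      have hjk2' : (i.1 / u) * u + (i.1 % u + 1) ≤ u * q :=
        hjk2 (i.1 / u) hdiv (i.1 % u + 1) hku
      simp only [emb, dif_pos (And.intro hjk1 hjk2')]
      congr 1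
      apply Fin.ext
      simp only []
      have hdm : u * (i.1 / u) + i.1 % u = i.1 := Nat.div_add_mod i.1 u
      have hc : (i.1 / u) * u = u * (i.1 / u) := mul_comm _ _
      omega
    intro t t' htt
    funext i
    rw [hleft t i, hleft t' i, htt]
  have hcard := Fintype.card_le_of_injective f hf
  simpa [Fintype.card_fun, mul_assoc] using hcard
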